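/- Let γ ∈ (0, 1) and α > 0, and consider g : ℝ → ℝ defined by g(T) = γ^T + α · ((1 − γ^{T/2})/(1 − √γ))². Then g attains its minimum over ℝ at T* = 2 · ln((α + (1 − √γ)²)/α) / ln(1/γ), and the minimum value equals g(T*) = s·α/(s·α + 1), where s = (1 − √γ)^{−2}. In particular g(T) ≥ sα/(sα + 1) for all real T. -/

import Mathlib

lemma quad_min_aux (c α u : ℝ) (hc : 0 < c) (hα : 0 < α) :
    α / (α + c) ≤ u ^ 2 + α * (1 - u) ^ 2 / c := by
  have h : u ^ 2 + α * (1 - u) ^ 2 / c = (u ^ 2 * c + α * (1 - u) ^ 2) / c := by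
    field_simp
  rw [h, div_le_div_iff₀ (by positivity) hc]
  nlinarith [sq_nonneg (u * (α + c) - α)]

/-- **Minimization of the dynamic-schedule excess-risk bound.**
For `γ ∈ (0,1)` and `α > 0`, the function
`g(T) = γ^T + α ((1 - γ^{T/2})/(1 - √γ))²` (real exponentiation) attains its minimum over ℝ
at `T* = 2 ln((α + (1 - √γ)²)/α)/ln(1/γ)`, with minimum value `sα/(sα + 1)` where
`s = (1 - √γ)⁻²`; in particular `g(T) ≥ sα/(sα + 1)` for all real `T`. -/
theorem dynamic_schedule_erub_minimum
    (γ α : ℝ) (hγ0 : 0 < γ) (hγ1 : γ < 1) (hα : 0 < α) :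
    let g : ℝ → ℝ := fun T => γ ^ T + α * ((1 - γ ^ (T / 2)) / (1 - Real.sqrt γ)) ^ 2
    let Tstar : ℝ := 2 * Real.log ((α + (1 - Real.sqrt γ) ^ 2) / α) / Real.log (1 / γ)
    let s : ℝ := ((1 - Real.sqrt γ)⁻¹) ^ 2
    (∀ T : ℝ, s * α / (s * α + 1) ≤ g T) ∧ g Tstar = s * α / (s * α + 1) := by
  intro g Tstar s
  have hsq1 : Real.sqrt γ < 1 := by
    rw [show (1:ℝ) = Real.sqrt 1 from Real.sqrt_one.symm]
    exact Real.sqrt_lt_sqrt hγ0.le hγ1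
  set c : ℝ := (1 - Real.sqrt γ) ^ 2 with hc_def
  have hc' : 0 < c := by rw [hc_def]; nlinarith
  have hcne : c ≠ 0 := ne_of_gt hc'
  have hval : s * α / (s * α + 1) = α / (α + c) := by
    have hs : s = c⁻¹ := by rw [hc_def]; simp [s, inv_pow]
    rw [hs]
    field_simp
  have hrw : ∀ T : ℝ, g T = (γ ^ (T / 2)) ^ 2 + α * (1 - γ ^ (T / 2)) ^ 2 / c := by
    intro T
    have h1 : γ ^ T = (γ ^ (T / 2)) ^ 2 := by
      rw [← Real.rpow_natCast (γ ^ (T / 2)) 2, ← Real.rpow_mul hγ0.le]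
      norm_num
    simp only [g, h1, div_pow, hc_def]
    ring
  constructor
  · intro T
    rw [hrw T, hval]
    exact quad_min_aux c α _ hc' hα
  · have hlogγ : Real.log γ < 0 := Real.log_neg hγ0 hγ1
    have hαc : 0 < α + c := by positivity
    have hustar : γ ^ (Tstar / 2) = α / (α + c) := by
      rw [Real.rpow_def_of_pos hγ0]
      rw [← Real.exp_log (show (0:ℝ) < α / (α + c) by positivity)]
      congr 1
      have h1 : Real.log (1 / γ) = -Real.log γ := by
        rw [one_div, Real.log_inv]
      have h2 : Real.log ((α + c) / α) = Real.log (α + c) - Real.log α :=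
        Real.log_div (ne_of_gt hαc) (ne_of_gt hα)
      have h3 : Real.log (α / (α + c)) = Real.log α - Real.log (α + c) :=
        Real.log_div (ne_of_gt hα) (ne_of_gt hαc)
      simp only [Tstar, ← hc_def, h1, h2, h3]
      field_simp [ne_of_lt hlogγ]
      ring
    rw [hrw, hustar, hval]
    field_simp
    ring
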